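/- The spinor-polynomial representation: the subspace 𝒳_spin is invariant under the three operators T̂, π̂ and Ŷ_γ (the Gaussian-conjugated spinor Dunkl operator), and it is irreducible under them: every K-subspace W ⊆ 𝒳_spin with W ≠ {0} that is invariant under T̂, π̂ and Ŷ_γ equals 𝒳_spin. -/

import Mathlib

/-!
The spinor Dunkl operators for the q-Toda theory of type A₁, acting on the space
`V = L × L` of spinors, where `L = K[X,X⁻¹]` is the ring of Laurent polynomials over
`K = ℚ(u)`, `q = u⁴`.
-/

noncomputable section

open LaurentPolynomial

/-- The ground field `K = ℚ(u)`. -/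
abbrev K : Type := RatFunc ℚ

/-- `u`, with `q = u⁴` (so `u = q^{1/4}`). -/
def u : K := RatFunc.X

/-- `q = u⁴`. -/
def q : K := u ^ 4

/-- The ring of Laurent polynomials `K[X,X⁻¹]`. -/
abbrev L : Type := LaurentPolynomial K

/-- The space of spinors: pairs of Laurent polynomials. -/
abbrev V : Type := L × L

/-- The `K`-algebra automorphism `Γ` of `L` with `Γ(X) = q^{1/2}X`. -/
def gam (f : L) : L := f.coeff.sum fun e r => (r * (u ^ 2) ^ e) • T e

/-- The inverse automorphism `Γ⁻¹`, with `Γ⁻¹(X) = q^{-1/2}X`. -/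
def gamInv (f : L) : L := f.coeff.sum fun e r => (r * (u ^ 2) ^ (-e)) • T e

/-- The spinor operator `T̂(f₁,f₂) = (0, f₁ - f₂)`. -/
def That (p : V) : V := (0, p.1 - p.2)

/-- The spinor operator `π̂(f₁,f₂) = (X·f₂ + X⁻¹·(f₁-f₂), X⁻¹·(f₁-f₂))`. -/
def piHat (p : V) : V :=
  (T 1 * p.2 + T (-1) * (p.1 - p.2), T (-1) * (p.1 - p.2))

/-- The spinor Dunkl operator
`Ŷ(f₁,f₂) = (Γ⁻¹(f₁-f₂), Γ(f₂) - Γ(X⁻²·(f₂-f₁)))`. -/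
def Yhat (p : V) : V :=
  (gamInv (p.1 - p.2), gam p.2 - gam (T (-2) * (p.2 - p.1)))

/-- The spinor Dunkl operator
`Ŷ′(f₁,f₂) = ((1-X⁻²)·Γ(f₁) + Γ⁻¹(f₂), Γ⁻¹(f₂) - X⁻²·Γ(f₁))`. -/
def Yhat' (p : V) : V :=
  ((1 - T (-2)) * gam p.1 + gamInv p.2, gamInv p.2 - T (-2) * gam p.1)
/-- The Gaussian-conjugated spinor Dunkl operator
`Ŷ_γ(f₁,f₂) = q^{1/4}·(X⁻¹·Γ⁻¹(f₁-f₂), X·Γ(f₂) + q⁻¹·X⁻¹·Γ(f₁-f₂))`. -/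
def YhatGam (p : V) : V :=
  u • (T (-1) * gamInv (p.1 - p.2),
       T 1 * gam p.2 + (q⁻¹ : K) • (T (-1) * gam (p.1 - p.2)))

/-- The spinor-polynomial subspace `𝒳_spin`, the span of the spinors `(1,1)`,
`(Xᵐ,0)` for `m ≥ 1` and `(0,Xᵐ)` for `m ≥ 1`. -/
def Xspin : Submodule K V :=
  Submodule.span K
    ({((1 : L), (1 : L))} ∪ {p : V | ∃ m : ℕ, 1 ≤ m ∧ p = (T (m : ℤ), 0)} ∪
      {p : V | ∃ m : ℕ, 1 ≤ m ∧ p = (0, T (m : ℤ))})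


/-! ### Auxiliary lemmas -/

section Aux

instance : CoeFun L (fun _ => ℤ → K) := ⟨fun f => f.coeff⟩

/-- The generating set of `Xspin`. -/
def genSet : Set V :=
  ({((1 : L), (1 : L))} ∪ {p : V | ∃ m : ℕ, 1 ≤ m ∧ p = (T (m : ℤ), 0)} ∪
      {p : V | ∃ m : ℕ, 1 ≤ m ∧ p = (0, T (m : ℤ))})

lemma Xspin_eq : Xspin = Submodule.span K genSet := rfl

-- scalar lemmas
lemma u_ne : (u : K) ≠ 0 := RatFunc.X_ne_zero

lemma u_pow_injective : Function.Injective fun n : ℤ => (u:K) ^ n := by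
  have h1 : ∀ n : ℕ, (u:K) ^ (n:ℤ) = 1 → n = 0 := by
    intro n hn
    rw [zpow_natCast] at hn
    have : (algebraMap (Polynomial ℚ) (RatFunc ℚ)) (Polynomial.X ^ n) =
        (algebraMap (Polynomial ℚ) (RatFunc ℚ)) 1 := by
      simpa [map_pow, RatFunc.algebraMap_X, u] using hn
    have := RatFunc.algebraMap_injective ℚ this
    have hd := congrArg Polynomial.natDegree this
    simpa [Polynomial.natDegree_X_pow] using hd
  intro a b hab
  simp only at hab
  wlog h : a ≤ b generalizing a b
  · exact (this hab.symm (le_of_not_ge h)).symm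
  have : (u:K) ^ ((b - a : ℤ)) = 1 := by
    rw [zpow_sub₀ u_ne, hab, div_self (zpow_ne_zero _ u_ne)]
  have hn : ((b - a).toNat : ℤ) = b - a := Int.toNat_of_nonneg (by omega)
  have := h1 (b - a).toNat (by rw [hn]; exact this)
  omega

lemma upow_ne {a b : ℤ} (h : a ≠ b) : (u:K) ^ a ≠ (u:K) ^ b :=
  fun hc => h (u_pow_injective hc)

lemma upow_ne_zero (a : ℤ) : (u:K) ^ a ≠ 0 := zpow_ne_zero _ u_ne

lemma c_pow (e : ℤ) : ((u ^ 2 : K)) ^ e = u ^ (2 * e) := by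
  rw [← zpow_natCast u 2, ← zpow_mul]; norm_num

lemma uu (a b : ℤ) : (u:K) ^ a * u ^ b = u ^ (a + b) := (zpow_add₀ u_ne a b).symm

lemma u_mul_upow (a : ℤ) : (u:K) * u ^ a = u ^ (1 + a) := by
  nth_rewrite 1 [← zpow_one (u:K)]
  rw [uu]

lemma qinv : (q:K)⁻¹ = u ^ (-4 : ℤ) := by
  rw [q, ← zpow_natCast u 4, ← zpow_neg]
  norm_num

-- coefficient lemmas
lemma cf_T (n m : ℤ) : (T n : L) m = if n = m then (1:K) else 0 := by
  exact T_apply m n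

lemma cf_one (m : ℤ) : ((1 : L)) m = if m = 0 then (1:K) else 0 := by
  rw [show (1 : L) = T 0 from T_zero.symm, cf_T]
  by_cases h : m = 0 <;> simp [h, eq_comm]

lemma cf_add (f g : L) (n : ℤ) : ((f + g : L)) n = f n + g n := rfl
lemma cf_sub (f g : L) (n : ℤ) : ((f - g : L)) n = f n - g n := by
  rw [sub_eq_add_neg, cf_add, sub_eq_add_neg]
  congr 1
lemma cf_smul (c : K) (f : L) (n : ℤ) : ((c • f : L)) n = c * f n := rfl
lemma cf_zero (n : ℤ) : ((0 : L)) n = 0 := rfl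

lemma cf_T_mul (k : ℤ) (f : L) (n : ℤ) : ((T k * f : L)) n = f (n - k) := by
  rw [show (T k : L) = AddMonoidAlgebra.single k 1 from rfl]
  rw [AddMonoidAlgebra.coeff_single_mul_apply f 1 k n, one_mul]
  ring_nf

lemma smul_T_single (r : K) (n : ℤ) : r • (T n : L) = AddMonoidAlgebra.single n r := by
  rw [show (T n : L) = AddMonoidAlgebra.single n 1 from rfl, AddMonoidAlgebra.smul_single', mul_one]

lemma cf_gam (f : L) (n : ℤ) : (gam f) n = f n * (u ^ 2) ^ n := by
  unfold gam
  rw [Finsupp.sum, AddMonoidAlgebra.coeff_sum, Finsupp.finsetSum_apply]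
  have : ∀ e ∈ f.coeff.support, ((f e * (u^2)^e) • (T e : L)) n
      = if e = n then f e * (u^2)^e else 0 := by
    intro e _
    rw [smul_T_single]; exact Finsupp.single_apply
  rw [Finset.sum_congr rfl this, Finset.sum_ite_eq' f.coeff.support n fun e => f e * (u^2)^e]
  by_cases h : n ∈ f.coeff.support
  · simp [h]
  · simp [h, Finsupp.notMem_support_iff.mp h]

lemma cf_gamInv (f : L) (n : ℤ) : (gamInv f) n = f n * (u ^ 2) ^ (-n) := by
  unfold gamInv
  rw [Finsupp.sum, AddMonoidAlgebra.coeff_sum, Finsupp.finsetSum_apply]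
  have : ∀ e ∈ f.coeff.support, ((f e * (u^2)^(-e)) • (T e : L)) n
      = if e = n then f e * (u^2)^(-e) else 0 := by
    intro e _
    rw [smul_T_single]; exact Finsupp.single_apply
  rw [Finset.sum_congr rfl this, Finset.sum_ite_eq' f.coeff.support n fun e => f e * (u^2)^(-e)]
  by_cases h : n ∈ f.coeff.support
  · simp [h]
  · simp [h, Finsupp.notMem_support_iff.mp h]

lemma Lext {f g : L} (h : ∀ n, f n = g n) : f = g := LaurentPolynomial.ext h

-- structure lemmas for gam / gamInv
lemma gam_add (f g : L) : gam (f + g) = gam f + gam g :=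
  Lext fun n => by rw [cf_gam, cf_add, cf_add, cf_gam, cf_gam]; ring
lemma gamInv_add (f g : L) : gamInv (f + g) = gamInv f + gamInv g :=
  Lext fun n => by rw [cf_gamInv, cf_add, cf_add, cf_gamInv, cf_gamInv]; ring
lemma gam_smul (c : K) (f : L) : gam (c • f) = c • gam f :=
  Lext fun n => by rw [cf_gam, cf_smul, cf_smul, cf_gam]; ring
lemma gamInv_smul (c : K) (f : L) : gamInv (c • f) = c • gamInv f :=
  Lext fun n => by rw [cf_gamInv, cf_smul, cf_smul, cf_gamInv]; ring
lemma gam_zero : gam 0 = 0 := Lext fun n => by rw [cf_gam]; simp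
lemma gamInv_zero : gamInv 0 = 0 := Lext fun n => by rw [cf_gamInv]; simp
lemma gam_neg (f : L) : gam (-f) = - gam f :=
  Lext fun n => by
    rw [cf_gam, show ((-f : L)) n = - f n from rfl,
      show ((-gam f : L)) n = - (gam f) n from rfl, cf_gam]
    ring
lemma gamInv_neg (f : L) : gamInv (-f) = - gamInv f :=
  Lext fun n => by
    rw [cf_gamInv, show ((-f : L)) n = - f n from rfl,
      show ((-gamInv f : L)) n = - (gamInv f) n from rfl, cf_gamInv]
    ring
lemma gam_T (m : ℤ) : gam (T m) = ((u:K) ^ (2*m)) • T m :=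
  Lext fun n => by
    rw [cf_gam, cf_smul, cf_T]
    by_cases h : m = n
    · subst h; rw [if_pos rfl, c_pow]; ring
    · rw [if_neg h]; ring
lemma gamInv_T (m : ℤ) : gamInv (T m) = ((u:K) ^ (-(2*m))) • T m :=
  Lext fun n => by
    rw [cf_gamInv, cf_smul, cf_T]
    by_cases h : m = n
    · subst h; rw [if_pos rfl, c_pow]; ring
    · rw [if_neg h]; ring
lemma gam_one : gam 1 = 1 := by
  have := gam_T 0
  simpa [T_zero] using this
lemma gamInv_T_mul (k : ℤ) (f : L) :
    gamInv (T k * f) = ((u:K) ^ (-(2*k))) • (T k * gamInv f) :=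
  Lext fun n => by
    rw [cf_gamInv, cf_T_mul, cf_smul, cf_T_mul, cf_gamInv, c_pow, c_pow]
    have : (u:K) ^ (-(2*k)) * (f (n-k) * u ^ (2 * -(n-k)))
        = f (n-k) * (u ^ (-(2*k)) * u ^ (2 * -(n-k))) := by ring
    rw [this, ← zpow_add₀ u_ne]
    congr 2
    ring

end Aux

section Ops

-- linearity of the three operators
lemma That_add (p p' : V) : That (p + p') = That p + That p' := by
  unfold That; ext <;> simp <;> ring
lemma That_smul (c : K) (p : V) : That (c • p) = c • That p := by
  unfold That; ext <;> simp [smul_sub]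
lemma piHat_add (p p' : V) : piHat (p + p') = piHat p + piHat p' := by
  unfold piHat; refine Prod.ext ?_ ?_ <;> simp <;> ring
lemma piHat_smul (c : K) (p : V) : piHat (c • p) = c • piHat p := by
  unfold piHat
  have h1 : (c • p).1 = c • p.1 := rfl
  have h2 : (c • p).2 = c • p.2 := rfl
  rw [h1, h2, ← smul_sub, mul_smul_comm, mul_smul_comm, ← smul_add]
  rfl
lemma YhatGam_add (p p' : V) : YhatGam (p + p') = YhatGam p + YhatGam p' := by
  unfold YhatGam
  have h1 : (p + p').1 - (p + p').2 = (p.1 - p.2) + (p'.1 - p'.2) := by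
    simp; ring
  rw [h1, gamInv_add, gam_add]
  have h2 : (p + p').2 = p.2 + p'.2 := rfl
  rw [h2, gam_add]
  rw [mul_add, mul_add, mul_add, smul_add (q⁻¹:K), ← smul_add u]
  congr 1
  apply Prod.ext
  · simp only [Prod.fst_add]
  · simp only [Prod.snd_add]; abel
lemma YhatGam_smul (c : K) (p : V) : YhatGam (c • p) = c • YhatGam p := by
  unfold YhatGam
  have h1 : (c • p).1 - (c • p).2 = c • (p.1 - p.2) := by simp [smul_sub]
  rw [h1, gamInv_smul, gam_smul]
  have h2 : (c • p).2 = c • p.2 := rfl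
  rw [h2, gam_smul]
  rw [mul_smul_comm, mul_smul_comm, mul_smul_comm, smul_comm (q⁻¹:K) c, ← smul_add]
  rw [show ((c • (T (-1) * gamInv (p.1 - p.2)), c • (T 1 * gam p.2 + q⁻¹ • (T (-1) * gam (p.1 - p.2)))) : V)
      = c • ((T (-1) * gamInv (p.1 - p.2), T 1 * gam p.2 + q⁻¹ • (T (-1) * gam (p.1 - p.2))) : V) from rfl]
  rw [smul_comm u c]

-- computations of the operators on basis-type vectors
lemma That_e : That ((1:L), (1:L)) = 0 := by unfold That; simp
lemma That_a (m : ℤ) : That ((T m, 0) : V) = ((0, T m) : V) := by unfold That; simp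
lemma That_b (m : ℤ) : That ((0, T m) : V) = -((0, T m) : V) := by
  unfold That
  apply Prod.ext <;> simp
lemma That_pair (a b : L) : That ((a, b) : V) = ((0, a - b) : V) := rfl
lemma sym_That (p : V) : p + That p = ((p.1, p.1) : V) := by
  unfold That
  apply Prod.ext
  · simp
  · simp only [Prod.snd_add]; abel

lemma piHat_e : piHat ((1:L), (1:L)) = ((T 1, 0) : V) := by
  unfold piHat; simp
lemma piHat_a (m : ℤ) : piHat ((T m, 0) : V) = ((T (m-1), T (m-1)) : V) := by
  unfold piHat
  simp only [mul_zero, sub_zero, zero_add, ← T_add]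
  rw [show (-1 + m : ℤ) = m - 1 by ring]
lemma piHat_b (m : ℤ) : piHat ((0, T m) : V) = ((T (m+1) - T (m-1), -T (m-1)) : V) := by
  unfold piHat
  simp only [zero_sub, mul_neg, ← T_add]
  apply Prod.ext
  · simp only []
    rw [show (1 + m : ℤ) = m + 1 by ring, show (-1 + m : ℤ) = m - 1 by ring]
    exact (sub_eq_add_neg _ _).symm
  · simp only []
    rw [show (-1 + m : ℤ) = m - 1 by ring]
lemma piHat_sym (f : L) : piHat ((f, f) : V) = ((T 1 * f, 0) : V) := by
  unfold piHat; simp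

lemma Y_e : YhatGam ((1:L), (1:L)) = ((0, u • T 1) : V) := by
  unfold YhatGam
  simp only [sub_self, gamInv_zero, gam_zero, gam_one, mul_zero, mul_one, smul_zero, add_zero]
  apply Prod.ext <;> simp

lemma Y_a (m : ℤ) : YhatGam ((T m, 0) : V) =
    (((u:K)^(1-2*m)) • T (m-1), ((u:K)^(2*m-3)) • T (m-1)) := by
  unfold YhatGam
  simp only [sub_zero, gam_zero, gamInv_T, gam_T, mul_zero, zero_add]
  rw [mul_smul_comm, mul_smul_comm, ← T_add, smul_smul (q⁻¹:K), Prod.smul_mk,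
    smul_smul, smul_smul, qinv, uu, show (-1 + m : ℤ) = m - 1 by ring,
    u_mul_upow, u_mul_upow, show (1 + -(2*m) : ℤ) = 1 - 2*m by ring,
    show (1 + (-4 + 2*m) : ℤ) = 2*m - 3 by ring]

lemma Y_b (m : ℤ) : YhatGam ((0, T m) : V) =
    ((-(u:K)^(1-2*m)) • T (m-1),
      ((u:K)^(2*m+1)) • T (m+1) - ((u:K)^(2*m-3)) • T (m-1)) := by
  unfold YhatGam
  simp only [zero_sub, gamInv_neg, gam_neg, gamInv_T, gam_T, mul_neg, smul_neg]
  rw [mul_smul_comm, mul_smul_comm, mul_smul_comm, ← T_add, ← T_add, smul_smul (q⁻¹:K)]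
  rw [Prod.smul_mk, smul_neg, smul_add, smul_neg, smul_smul, smul_smul, smul_smul,
    qinv, uu, u_mul_upow, u_mul_upow, u_mul_upow, ← neg_smul,
    show (-1 + m : ℤ) = m - 1 by ring, show (1 + m : ℤ) = m + 1 by ring,
    show (1 + -(2*m) : ℤ) = 1 - 2*m by ring, show (1 + 2*m : ℤ) = 2*m + 1 by ring,
    show (1 + (-4 + 2*m) : ℤ) = 2*m - 3 by ring,
    sub_eq_add_neg (((u:K)^(2*m+1)) • T (m+1))]

lemma Y_c (m : ℤ) : YhatGam ((T m, T m) : V) = ((0, ((u:K)^(2*m+1)) • T (m+1)) : V) := by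
  unfold YhatGam
  simp only [sub_self, gamInv_zero, gam_zero, gam_T, mul_zero, smul_zero, add_zero]
  rw [mul_smul_comm, ← T_add, Prod.smul_mk, smul_zero, smul_smul, u_mul_upow,
    show (1 + m : ℤ) = m + 1 by ring, show (1 + 2*m : ℤ) = 2*m + 1 by ring]

lemma piHat_c (m : ℤ) : piHat ((T m, T m) : V) = ((T (m+1), 0) : V) := by
  rw [piHat_sym, ← T_add, show (1 + m : ℤ) = m + 1 by ring]

lemma Gid (f : L) :
    u • (YhatGam (piHat ((f, f) : V)) + That (YhatGam (piHat ((f, f) : V))))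
      = ((gamInv f, gamInv f) : V) := by
  rw [piHat_sym, sym_That]
  have h1 : (YhatGam ((T 1 * f, 0) : V)).1 = u • (T (-1) * gamInv (T 1 * f)) := by
    unfold YhatGam
    simp only [sub_zero]
    rfl
  rw [h1, gamInv_T_mul, mul_smul_comm, ← mul_assoc, ← T_add]
  norm_num [T_zero]
  rw [smul_smul, smul_smul,
    show (u * u * ((u:K) ^ (2:ℕ))⁻¹ : K) = 1 from by
      rw [← pow_two (u:K), mul_inv_cancel₀ (pow_ne_zero 2 u_ne)], one_smul]

end Ops

section Invariance

lemma mem_e : (((1:L), (1:L)) : V) ∈ Xspin :=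
  Submodule.subset_span (Or.inl (Or.inl rfl))

lemma mem_a {m : ℤ} (h : 1 ≤ m) : ((T m, 0) : V) ∈ Xspin := by
  apply Submodule.subset_span
  refine Or.inl (Or.inr ⟨m.toNat, ?_, ?_⟩)
  · omega
  · rw [Int.toNat_of_nonneg (by omega)]

lemma mem_b {m : ℤ} (h : 1 ≤ m) : ((0, T m) : V) ∈ Xspin := by
  apply Submodule.subset_span
  refine Or.inr ⟨m.toNat, ?_, ?_⟩
  · omega
  · rw [Int.toNat_of_nonneg (by omega)]

lemma mem_c {m : ℤ} (h : 0 ≤ m) : ((T m, T m) : V) ∈ Xspin := by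
  rcases eq_or_lt_of_le h with h0 | h1
  · rw [← h0, T_zero]; exact mem_e
  · have := Xspin.add_mem (mem_a h1) (mem_b h1)
    simpa using this

lemma op_stable (op : V → V) (hadd : ∀ p p', op (p + p') = op p + op p')
    (hsmul : ∀ (c : K) p, op (c • p) = c • op p)
    (hgen : ∀ g ∈ genSet, op g ∈ Xspin) : ∀ p ∈ Xspin, op p ∈ Xspin := by
  intro p hp
  rw [Xspin_eq] at hp
  refine Submodule.span_induction hgen ?_ ?_ ?_ hp
  · have h := hsmul 0 0
    rw [zero_smul, zero_smul] at h
    rw [h]; exact Xspin.zero_mem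
  · intro x y _ _ hx hy
    rw [hadd]; exact Xspin.add_mem hx hy
  · intro c x _ hx
    rw [hsmul]; exact Xspin.smul_mem c hx

lemma That_stable : ∀ p ∈ Xspin, That p ∈ Xspin := by
  refine op_stable That That_add That_smul ?_
  rintro g ((rfl | ⟨m, hm, rfl⟩) | ⟨m, hm, rfl⟩)
  · rw [That_e]; exact Xspin.zero_mem
  · rw [That_a]; exact mem_b (by exact_mod_cast hm)
  · rw [That_b]; exact Xspin.neg_mem (mem_b (by exact_mod_cast hm))

lemma piHat_stable : ∀ p ∈ Xspin, piHat p ∈ Xspin := by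
  refine op_stable piHat piHat_add piHat_smul ?_
  rintro g ((rfl | ⟨m, hm, rfl⟩) | ⟨m, hm, rfl⟩)
  · rw [piHat_e]; exact mem_a le_rfl
  · rw [piHat_a]; exact mem_c (by omega)
  · rw [piHat_b]
    have h1 : ((T ((m:ℤ)+1) - T ((m:ℤ)-1), -T ((m:ℤ)-1)) : V)
        = ((T ((m:ℤ)+1), 0) : V) - ((T ((m:ℤ)-1), T ((m:ℤ)-1)) : V) := by
      apply Prod.ext <;> simp
    rw [h1]
    exact Xspin.sub_mem (mem_a (by omega)) (mem_c (by omega))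

lemma YhatGam_stable : ∀ p ∈ Xspin, YhatGam p ∈ Xspin := by
  refine op_stable YhatGam YhatGam_add YhatGam_smul ?_
  rintro g ((rfl | ⟨m, hm, rfl⟩) | ⟨m, hm, rfl⟩)
  · rw [Y_e]
    have h0 : ((0, u • T 1) : V) = u • ((0, T 1) : V) := by
      apply Prod.ext <;> simp
    rw [h0]
    exact Xspin.smul_mem u (mem_b le_rfl)
  · rw [Y_a]
    have h1 : (((u:K)^(1-2*(m:ℤ))) • T ((m:ℤ)-1), ((u:K)^(2*(m:ℤ)-3)) • T ((m:ℤ)-1))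
        = ((u:K)^(1-2*(m:ℤ))) • ((T ((m:ℤ)-1), 0) : V)
          + ((u:K)^(2*(m:ℤ)-3)) • ((0, T ((m:ℤ)-1)) : V) := by
      apply Prod.ext <;> simp
    rw [h1]
    rcases Nat.lt_or_ge m 2 with h2 | h2
    · have hm1 : m = 1 := by omega
      subst hm1
      push_cast
      norm_num
      have h3 : ((u⁻¹ • (1:L), u⁻¹ • (1:L)) : V) = u⁻¹ • (((1:L), (1:L)) : V) := by
        apply Prod.ext <;> simp
      rw [h3]
      exact Xspin.smul_mem _ mem_e
    · exact Xspin.add_mem (Xspin.smul_mem _ (mem_a (by omega)))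
        (Xspin.smul_mem _ (mem_b (by omega)))
  · rw [Y_b]
    have h1 : ((-(u:K)^(1-2*(m:ℤ))) • T ((m:ℤ)-1),
          ((u:K)^(2*(m:ℤ)+1)) • T ((m:ℤ)+1) - ((u:K)^(2*(m:ℤ)-3)) • T ((m:ℤ)-1))
        = ((u:K)^(2*(m:ℤ)+1)) • ((0, T ((m:ℤ)+1)) : V)
          - (((u:K)^(1-2*(m:ℤ))) • ((T ((m:ℤ)-1), 0) : V)
            + ((u:K)^(2*(m:ℤ)-3)) • ((0, T ((m:ℤ)-1)) : V)) := by
      apply Prod.ext <;> simp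
    rw [h1]
    refine Xspin.sub_mem (Xspin.smul_mem _ (mem_b (by omega))) ?_
    rcases Nat.lt_or_ge m 2 with h2 | h2
    · have hm1 : m = 1 := by omega
      subst hm1
      push_cast
      norm_num
      have h3 : ((u⁻¹ • (1:L), u⁻¹ • (1:L)) : V) = u⁻¹ • (((1:L), (1:L)) : V) := by
        apply Prod.ext <;> simp
      rw [h3]
      exact Xspin.smul_mem _ mem_e
    · exact Xspin.add_mem (Xspin.smul_mem _ (mem_a (by omega)))
        (Xspin.smul_mem _ (mem_b (by omega)))

end Invariance

section Irreducibility

lemma Xspin_cond : ∀ p ∈ Xspin,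
    (∀ n : ℤ, n < 0 → p.1 n = 0) ∧ (∀ n : ℤ, n < 0 → p.2 n = 0) ∧ p.1 0 = p.2 0 := by
  intro p hp
  rw [Xspin_eq] at hp
  refine Submodule.span_induction ?_ ?_ ?_ ?_ hp
  · rintro g ((rfl | ⟨m, hm, rfl⟩) | ⟨m, hm, rfl⟩)
    · refine ⟨fun n hn => ?_, fun n hn => ?_, rfl⟩ <;>
        · show ((1:L)) n = 0
          rw [cf_one, if_neg (by omega)]
    · refine ⟨fun n hn => ?_, fun n hn => rfl, ?_⟩
      · show (T ((m:ℤ)) : L) n = 0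
        rw [cf_T, if_neg (by omega)]
      · show (T ((m:ℤ)) : L) 0 = ((0:L)) 0
        rw [cf_T, if_neg (by omega), cf_zero]
    · refine ⟨fun n hn => rfl, fun n hn => ?_, ?_⟩
      · show (T ((m:ℤ)) : L) n = 0
        rw [cf_T, if_neg (by omega)]
      · show ((0:L)) 0 = (T ((m:ℤ)) : L) 0
        rw [cf_T, if_neg (by omega), cf_zero]
  · exact ⟨fun n _ => rfl, fun n _ => rfl, rfl⟩
  · rintro x y _ _ ⟨hx1, hx2, hx3⟩ ⟨hy1, hy2, hy3⟩
    refine ⟨fun n hn => ?_, fun n hn => ?_, ?_⟩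
    · show ((x.1 + y.1 : L)) n = 0
      rw [cf_add, hx1 n hn, hy1 n hn, add_zero]
    · show ((x.2 + y.2 : L)) n = 0
      rw [cf_add, hx2 n hn, hy2 n hn, add_zero]
    · show ((x.1 + y.1 : L)) 0 = ((x.2 + y.2 : L)) 0
      rw [cf_add, cf_add, hx3, hy3]
  · rintro c x _ ⟨hx1, hx2, hx3⟩
    refine ⟨fun n hn => ?_, fun n hn => ?_, ?_⟩
    · show ((c • x.1 : L)) n = 0
      rw [cf_smul, hx1 n hn, mul_zero]
    · show ((c • x.2 : L)) n = 0
      rw [cf_smul, hx2 n hn, mul_zero]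
    · show ((c • x.1 : L)) 0 = ((c • x.2 : L)) 0
      rw [cf_smul, cf_smul, hx3]

lemma split_pair (W : Submodule K V) {α β : K} {j : ℤ}
    (hαβ : α ≠ β) (hα : α ≠ 0)
    (h : ((α • T j, β • T j) : V) ∈ W)
    (hT : ∀ p ∈ W, That p ∈ W) :
    ((T j, 0) : V) ∈ W ∧ ((0, T j) : V) ∈ W := by
  have h1 : That ((α • T j, β • T j) : V) ∈ W := hT _ h
  rw [That_pair, ← sub_smul] at h1
  have hb : ((0, T j) : V) ∈ W := by
    have h2 := W.smul_mem (α - β)⁻¹ h1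
    have h3 : (α - β)⁻¹ • (((0:L), (α - β) • T j) : V) = ((0, T j) : V) := by
      apply Prod.ext
      · simp
      · show (α - β)⁻¹ • ((α - β) • T j) = T j
        rw [smul_smul, inv_mul_cancel₀ (sub_ne_zero.mpr hαβ), one_smul]
    rwa [h3] at h2
  refine ⟨?_, hb⟩
  have h4 := W.sub_mem h (W.smul_mem β hb)
  have h5 : ((α • T j, β • T j) : V) - β • ((0, T j) : V) = ((α • T j, 0) : V) := by
    apply Prod.ext
    · simp
    · show β • T j - β • T j = (0 : L)
      rw [sub_self]
  rw [h5] at h4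
  have h6 := W.smul_mem α⁻¹ h4
  have h7 : α⁻¹ • ((α • T j, (0:L)) : V) = ((T j, 0) : V) := by
    apply Prod.ext
    · show α⁻¹ • (α • T j) = T j
      rw [smul_smul, inv_mul_cancel₀ hα, one_smul]
    · simp
  rwa [h7] at h6

lemma descent (W : Submodule K V)
    (hW : ∀ p ∈ W, That p ∈ W ∧ piHat p ∈ W ∧ YhatGam p ∈ W) :
    ∀ m : ℕ, ((T ((m:ℤ)), T ((m:ℤ))) : V) ∈ W → (((1:L), (1:L)) : V) ∈ W := by
  intro m
  induction m with
  | zero => intro h; simpa [T_zero] using h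
  | succ k ih =>
    intro h
    push_cast at h
    have hA : ((T ((k:ℤ)+1+1), 0) : V) ∈ W := by
      have := (hW _ h).2.1
      rwa [piHat_c] at this
    have hy := (hW _ hA).2.2
    rw [Y_a] at hy
    have hsplit := split_pair W
      (upow_ne (a := 1-2*((k:ℤ)+1+1)) (b := 2*((k:ℤ)+1+1)-3) (by omega))
      (upow_ne_zero _) hy (fun p hp => (hW p hp).1)
    have ha := hsplit.1
    have := (hW _ ha).2.1
    rw [piHat_a] at this
    rw [show ((k:ℤ)+1+1-1-1) = (k:ℤ) by ring] at this
    exact ih this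

lemma ascent (W : Submodule K V)
    (hW : ∀ p ∈ W, That p ∈ W ∧ piHat p ∈ W ∧ YhatGam p ∈ W)
    (h1 : (((1:L), (1:L)) : V) ∈ W) :
    ∀ m : ℕ, ((T ((m:ℤ)), T ((m:ℤ))) : V) ∈ W := by
  intro m
  induction m with
  | zero => simpa [T_zero] using h1
  | succ k ih =>
    push_cast
    have ha : ((T ((k:ℤ)+1), 0) : V) ∈ W := by
      have := (hW _ ih).2.1
      rwa [piHat_c] at this
    have hb' := (hW _ ih).2.2
    rw [Y_c] at hb'
    have hb : ((0, T ((k:ℤ)+1)) : V) ∈ W := by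
      have h2 := W.smul_mem ((u:K)^(2*(k:ℤ)+1))⁻¹ hb'
      have h3 : ((u:K)^(2*(k:ℤ)+1))⁻¹ • (((0:L), ((u:K)^(2*(k:ℤ)+1)) • T ((k:ℤ)+1)) : V)
          = ((0, T ((k:ℤ)+1)) : V) := by
        apply Prod.ext
        · simp
        · show ((u:K)^(2*(k:ℤ)+1))⁻¹ • (((u:K)^(2*(k:ℤ)+1)) • T ((k:ℤ)+1)) = T ((k:ℤ)+1)
          rw [smul_smul, inv_mul_cancel₀ (upow_ne_zero _), one_smul]
      rwa [h3] at h2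
    have hsum := W.add_mem ha hb
    have h4 : ((T ((k:ℤ)+1), 0) : V) + ((0, T ((k:ℤ)+1)) : V)
        = ((T ((k:ℤ)+1), T ((k:ℤ)+1)) : V) := by
      apply Prod.ext <;> simp
    rwa [h4] at hsum

lemma sep (W : Submodule K V)
    (hW : ∀ p ∈ W, That p ∈ W ∧ piHat p ∈ W ∧ YhatGam p ∈ W) :
    ∀ N : ℕ, ∀ g : L, g.coeff.support.card ≤ N → g ≠ 0 → (∀ n : ℤ, n < 0 → g n = 0) →
    ((g, g) : V) ∈ W → ∃ m : ℕ, ((T ((m:ℤ)), T ((m:ℤ))) : V) ∈ W := by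
  intro N
  induction N with
  | zero =>
    intro g hcard hg _ _
    exact absurd ((AddMonoidAlgebra.coeff_inj (y := 0)).mp (Finsupp.support_eq_empty.mp
      (Finset.card_eq_zero.mp (le_antisymm hcard (Nat.zero_le _))))) hg
  | succ N ih =>
    intro g hcard hg hneg hgW
    obtain ⟨m₀, hm₀⟩ := Finsupp.support_nonempty_iff.mpr (fun h => hg ((AddMonoidAlgebra.coeff_inj (y := 0)).mp h))
    have hgm₀ : g m₀ ≠ 0 := Finsupp.mem_support_iff.mp hm₀
    have hm₀0 : 0 ≤ m₀ := by
      by_contra hcon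
      exact hgm₀ (hneg m₀ (by omega))
    by_cases hone : g.coeff.support = {m₀}
    · have hgeq : g = (g m₀) • T m₀ := Lext fun n => by
        rw [cf_smul, cf_T]
        by_cases h : m₀ = n
        · subst h; simp
        · rw [if_neg h, mul_zero]
          refine Finsupp.notMem_support_iff.mp ?_
          rw [hone]
          simp only [Finset.mem_singleton]
          exact fun hc => h hc.symm
      refine ⟨m₀.toNat, ?_⟩
      rw [Int.toNat_of_nonneg hm₀0]
      have h2 := W.smul_mem (g m₀)⁻¹ hgW
      have hpair : ((g, g) : V) = (((g m₀) • T m₀, (g m₀) • T m₀) : V) :=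
        congrArg (fun x => ((x, x) : V)) hgeq
      have h3 : (g m₀)⁻¹ • ((g, g) : V) = ((T m₀, T m₀) : V) := by
        rw [hpair]
        apply Prod.ext <;>
          · show (g m₀)⁻¹ • ((g m₀) • T m₀) = T m₀
            rw [smul_smul, inv_mul_cancel₀ hgm₀, one_smul]
      rwa [h3] at h2
    · have hGW : ((gamInv g, gamInv g) : V) ∈ W := by
        have h1 := (hW _ hgW).2.1
        have h2 := (hW _ h1).2.2
        have h3 := (hW _ h2).1
        have h4 := W.smul_mem u (W.add_mem h2 h3)
        rwa [Gid] at h4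
      set c : K := (u:K)^(-(2*m₀)) with hc
      set g' : L := gamInv g - c • g with hg'def
      have hg'W : ((g', g') : V) ∈ W := by
        have := W.sub_mem hGW (W.smul_mem c hgW)
        have heq : ((gamInv g, gamInv g) : V) - c • ((g, g) : V) = ((g', g') : V) := by
          apply Prod.ext <;> rfl
        rwa [heq] at this
      have hcf : ∀ n, g' n = g n * ((u:K)^(-(2*n)) - c) := fun n => by
        rw [hg'def, cf_sub, cf_gamInv, cf_smul, c_pow, show (2 * -n : ℤ) = -(2*n) by ring]
        ring
      have hsupp : g'.coeff.support = g.coeff.support.erase m₀ := by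
        ext n
        rw [Finsupp.mem_support_iff, Finset.mem_erase, Finsupp.mem_support_iff, hcf]
        constructor
        · intro h
          have h1 : g n ≠ 0 := fun h0 => h (by rw [h0]; ring)
          refine ⟨fun h0 => ?_, h1⟩
          subst h0
          exact h (by rw [hc]; ring)
        · rintro ⟨hne, hgn⟩
          exact mul_ne_zero hgn (sub_ne_zero.mpr (upow_ne (by omega)))
      have hg'0 : g' ≠ 0 := by
        intro h0
        have h5 : g.coeff.support.erase m₀ = ∅ := by
          rw [← hsupp, h0]
          simp
        refine hone (Finset.eq_singleton_iff_unique_mem.mpr ⟨hm₀, fun x hx => ?_⟩)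
        by_contra hne
        have : x ∈ g.coeff.support.erase m₀ := Finset.mem_erase.mpr ⟨hne, hx⟩
        rw [h5] at this
        exact absurd this (Finset.notMem_empty x)
      have hcard' : g'.coeff.support.card ≤ N := by
        rw [hsupp]
        have h6 := Finset.card_erase_of_mem hm₀
        have h7 : 1 ≤ g.coeff.support.card := Finset.card_pos.mpr ⟨m₀, hm₀⟩
        omega
      have hneg' : ∀ n : ℤ, n < 0 → g' n = 0 := fun n hn => by
        rw [hcf, hneg n hn, zero_mul]
      exact ih g' hcard' hg'0 hneg' hg'W

lemma get_sym (W : Submodule K V) (hle : W ≤ Xspin)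
    (hW : ∀ p ∈ W, That p ∈ W ∧ piHat p ∈ W ∧ YhatGam p ∈ W)
    {w : V} (hw : w ∈ W) (hw0 : w ≠ 0) :
    ∃ g : L, g ≠ 0 ∧ (∀ n : ℤ, n < 0 → g n = 0) ∧ ((g, g) : V) ∈ W := by
  obtain ⟨h1, h2, h3⟩ := Xspin_cond w (hle hw)
  by_cases hw1 : w.1 = 0
  · have hw2 : w.2 ≠ 0 := by
      intro h0
      exact hw0 (Prod.ext hw1 h0)
    set p' := piHat w with hp'
    have hp'W : p' ∈ W := (hW _ hw).2.1
    have hs : ((p'.1, p'.1) : V) ∈ W := by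
      have := W.add_mem hp'W ((hW _ hp'W).1)
      rwa [sym_That] at this
    have hp1 : p'.1 = T 1 * w.2 - T (-1) * w.2 := by
      rw [hp']
      show T 1 * w.2 + T (-1) * (w.1 - w.2) = _
      rw [hw1]
      ring
    refine ⟨p'.1, ?_, ?_, hs⟩
    · rw [hp1, ← sub_mul]
      refine mul_ne_zero ?_ hw2
      intro h0
      have h4 : ((T 1 - T (-1) : L)) 1 = ((0:L)) 1 := by rw [h0]
      rw [cf_sub, cf_T, cf_T, cf_zero] at h4
      norm_num at h4
    · intro n hn
      rw [hp1, cf_sub, cf_T_mul, cf_T_mul]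
      have e1 : w.2 (n - 1) = 0 := h2 _ (by omega)
      have e2 : w.2 (n - (-1)) = 0 := by
        rcases lt_or_eq_of_le (show n ≤ -1 by omega) with h4 | h4
        · exact h2 _ (by omega)
        · rw [show n - (-1) = 0 by omega, ← h3, hw1]
          rfl
      rw [e1, e2, sub_zero]
  · refine ⟨w.1, hw1, h1, ?_⟩
    have := W.add_mem hw ((hW _ hw).1)
    rwa [sym_That] at this

end Irreducibility

/-- The spinor-polynomial representation: `𝒳_spin` is invariant under `T̂`, `π̂` and
the Gaussian-conjugated spinor Dunkl operator `Ŷ_γ`, and is irreducible under them: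
every nonzero `K`-subspace `W ⊆ 𝒳_spin` invariant under the three operators equals
`𝒳_spin`. -/
theorem spinor_polynomial_representation :
    (∀ p ∈ Xspin, That p ∈ Xspin ∧ piHat p ∈ Xspin ∧ YhatGam p ∈ Xspin) ∧
    (∀ W : Submodule K V, W ≤ Xspin → W ≠ ⊥ →
      (∀ p ∈ W, That p ∈ W ∧ piHat p ∈ W ∧ YhatGam p ∈ W) → W = Xspin) := by
  constructor
  · intro p hp
    exact ⟨That_stable p hp, piHat_stable p hp, YhatGam_stable p hp⟩
  · intro W hle hne hW
    obtain ⟨w, hwW, hw0⟩ := (Submodule.ne_bot_iff W).mp hne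
    obtain ⟨g, hg0, hgneg, hgW⟩ := get_sym W hle hW hwW hw0
    obtain ⟨m, hm⟩ := sep W hW g.coeff.support.card g le_rfl hg0 hgneg hgW
    have he : (((1:L), (1:L)) : V) ∈ W := descent W hW m hm
    refine le_antisymm hle ?_
    rw [Xspin_eq, Submodule.span_le]
    rintro g' ((rfl | ⟨k, hk, rfl⟩) | ⟨k, hk, rfl⟩)
    · exact he
    · have hc := ascent W hW he (k-1)
      have hT := (hW _ hc).2.1
      rw [piHat_c] at hT
      rwa [show (((k-1:ℕ):ℤ) + 1) = (k:ℤ) by push_cast [hk]; omega] at hT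
    · have hc := ascent W hW he (k-1)
      have hT := (hW _ hc).2.1
      rw [piHat_c] at hT
      rw [show (((k-1:ℕ):ℤ) + 1) = (k:ℤ) by push_cast [hk]; omega] at hT
      have hT2 := (hW _ hT).1
      rwa [That_a] at hT2
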